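/- Let Σ_x be a real n×n positive semidefinite matrix, Φ a real ℓ×n matrix, and Σ := Σ_x^{1/2}·Φᵀ·Φ·Σ_x^{1/2}. Let u₁,…,u_n be an orthonormal basis of ℝⁿ consisting of eigenvectors of Σ, with Σ·uᵢ = λᵢ·uᵢ and λᵢ ≥ 0 for all i. Then for every σ² > 0, MMSE(σ²) = Σ_{i=1}^{n} (σ²/(σ² + λᵢ)) · uᵢᵀ·Σ_x·uᵢ. -/

import Mathlib

open Matrix

noncomputable def Matrix.PosSemidef.sqrt {n : Type*} [Fintype n] [DecidableEq n]
    {A : Matrix n n ℝ} (hA : A.PosSemidef) : Matrix n n ℝ :=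
  (hA.1.eigenvectorUnitary : Matrix n n ℝ) *
    diagonal ((↑) ∘ (fun x : ℝ => Real.sqrt x) ∘ hA.1.eigenvalues) *
    (star hA.1.eigenvectorUnitary : Matrix n n ℝ)

lemma Matrix.PosSemidef.sqrt_isHermitian {n : Type*} [Fintype n] [DecidableEq n]
    {A : Matrix n n ℝ} (hA : A.PosSemidef) : hA.sqrt.IsHermitian := by
  unfold Matrix.PosSemidef.sqrt
  simp only [IsHermitian, conjTranspose_mul, star_eq_conjTranspose, conjTranspose_conjTranspose,
    diagonal_conjTranspose, star_trivial, Matrix.mul_assoc]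

lemma Matrix.PosSemidef.sqrt_mul_self {n : Type*} [Fintype n] [DecidableEq n]
    {A : Matrix n n ℝ} (hA : A.PosSemidef) : hA.sqrt * hA.sqrt = A := by
  unfold Matrix.PosSemidef.sqrt
  have hU : (star hA.1.eigenvectorUnitary : Matrix n n ℝ) * (hA.1.eigenvectorUnitary : Matrix n n ℝ) = 1 :=
    Unitary.coe_star_mul_self _
  have hD : diagonal ((↑) ∘ (fun x : ℝ => Real.sqrt x) ∘ hA.1.eigenvalues) *
      diagonal ((↑) ∘ (fun x : ℝ => Real.sqrt x) ∘ hA.1.eigenvalues) =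
      diagonal ((↑) ∘ hA.1.eigenvalues : n → ℝ) := by
    rw [diagonal_mul_diagonal]
    congr 1; funext i
    simp [Real.mul_self_sqrt (hA.eigenvalues_nonneg i)]
  conv_rhs => rw [hA.1.spectral_theorem, Unitary.conjStarAlgAut_apply]
  calc _ = (hA.1.eigenvectorUnitary : Matrix n n ℝ) *
      (diagonal ((↑) ∘ (fun x : ℝ => Real.sqrt x) ∘ hA.1.eigenvalues) *
      ((star hA.1.eigenvectorUnitary : Matrix n n ℝ) * (hA.1.eigenvectorUnitary : Matrix n n ℝ)) *
      diagonal ((↑) ∘ (fun x : ℝ => Real.sqrt x) ∘ hA.1.eigenvalues)) *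
      (star hA.1.eigenvectorUnitary : Matrix n n ℝ) := by simp only [Matrix.mul_assoc]
    _ = _ := by rw [hU, Matrix.mul_one, hD]; rfl

/-- Trace of a matrix equals the sum of quadratic forms over an orthonormal basis. -/
lemma trace_eq_sum_dot_aux {n : ℕ} (u : Fin n → Fin n → ℝ)
    (hortho : ∀ i j, u i ⬝ᵥ u j = if i = j then 1 else 0)
    (M : Matrix (Fin n) (Fin n) ℝ) :
    M.trace = ∑ i, u i ⬝ᵥ M.mulVec (u i) := by
  set U : Matrix (Fin n) (Fin n) ℝ := Matrix.of u with hU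
  have hUU : U * Uᵀ = 1 := by
    ext i j
    simpa [hU, Matrix.mul_apply, dotProduct, Matrix.one_apply] using hortho i j
  have hUtU : Uᵀ * U = 1 := mul_eq_one_comm.mp hUU
  have h1 : M.trace = (U * M * Uᵀ).trace := by
    rw [Matrix.trace_mul_cycle, Matrix.mul_assoc, ← Matrix.mul_assoc Uᵀ U M, hUtU,
      Matrix.one_mul]
  rw [h1]
  rw [Matrix.trace]
  apply Finset.sum_congr rfl
  intro i _
  simp only [Matrix.diag, Matrix.mul_apply, dotProduct, Matrix.mulVec, Matrix.transpose_apply,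
    Finset.sum_mul, Finset.mul_sum]
  rw [Finset.sum_comm]
  apply Finset.sum_congr rfl; intro a _
  apply Finset.sum_congr rfl; intro b _
  simp only [hU, Matrix.of_apply]
  ring

/-- If u₁,…,u_n is an orthonormal basis of eigenvectors of
Σ = Σ_x^{1/2}·Φᵀ·Φ·Σ_x^{1/2} with nonnegative eigenvalues λᵢ, then for every σ² > 0,
MMSE(σ²) = ∑ᵢ (σ²/(σ² + λᵢ)) · uᵢᵀ·Σ_x·uᵢ. -/
theorem stmt_1 {n l : ℕ} (Sx : Matrix (Fin n) (Fin n) ℝ) (hSx : Sx.PosSemidef)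
    (Φ : Matrix (Fin l) (Fin n) ℝ)
    (u : Fin n → Fin n → ℝ) (lam : Fin n → ℝ)
    (hortho : ∀ i j, u i ⬝ᵥ u j = if i = j then 1 else 0)
    (heig : ∀ i, (hSx.sqrt * Φᵀ * Φ * hSx.sqrt).mulVec (u i) = lam i • u i)
    (hnonneg : ∀ i, 0 ≤ lam i)
    (σ2 : ℝ) (hσ2 : 0 < σ2) :
    (Sx - Sx * Φᵀ * (σ2 • (1 : Matrix (Fin l) (Fin l) ℝ) + Φ * Sx * Φᵀ)⁻¹ * Φ * Sx).trace
      = ∑ i, (σ2 / (σ2 + lam i)) * (u i ⬝ᵥ Sx.mulVec (u i)) := by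
  set S := hSx.sqrt with hS
  have hSsymm : Sᵀ = S := by
    rw [← Matrix.conjTranspose_eq_transpose_of_trivial]
    exact hSx.sqrt_isHermitian
  have hSS : S * S = Sx := hSx.sqrt_mul_self
  set B : Matrix (Fin l) (Fin n) ℝ := Φ * S with hB
  have hBt : Bᵀ = S * Φᵀ := by rw [hB, Matrix.transpose_mul, hSsymm]
  set M : Matrix (Fin n) (Fin n) ℝ := S * Φᵀ * Φ * S with hM
  have hMB : M = Bᵀ * B := by
    rw [hM, hBt, hB, Matrix.mul_assoc]
  have hMpsd : M.PosSemidef := by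
    rw [hMB]
    have := Matrix.posSemidef_conjTranspose_mul_self B
    rwa [Matrix.conjTranspose_eq_transpose_of_trivial] at this
  have hBBpsd : (B * Bᵀ).PosSemidef := by
    have := Matrix.posSemidef_self_mul_conjTranspose B
    rwa [Matrix.conjTranspose_eq_transpose_of_trivial] at this
  set A1 : Matrix (Fin l) (Fin l) ℝ := σ2 • (1 : Matrix (Fin l) (Fin l) ℝ) + Φ * Sx * Φᵀ
    with hA1
  set A2 : Matrix (Fin n) (Fin n) ℝ := σ2 • (1 : Matrix (Fin n) (Fin n) ℝ) + M with hA2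
  have hΦSx : Φ * Sx = B * S := by rw [hB, ← hSS, ← Matrix.mul_assoc]
  have hSxΦ : Sx * Φᵀ = S * Bᵀ := by rw [hBt, ← hSS, Matrix.mul_assoc]
  have hA1B : A1 = σ2 • (1 : Matrix (Fin l) (Fin l) ℝ) + B * Bᵀ := by
    rw [hA1, hΦSx, Matrix.mul_assoc, ← hBt]
  have hA1pd : A1.PosDef := by
    rw [hA1B, Matrix.smul_one_eq_diagonal]
    exact (Matrix.posDef_diagonal_iff.mpr fun _ => hσ2).add_posSemidef hBBpsd
  have hA2pd : A2.PosDef := by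
    rw [hA2, Matrix.smul_one_eq_diagonal]
    exact (Matrix.posDef_diagonal_iff.mpr fun _ => hσ2).add_posSemidef hMpsd
  have hA1d : IsUnit A1.det := hA1pd.det_pos.ne'.isUnit
  have hA2d : IsUnit A2.det := hA2pd.det_pos.ne'.isUnit
  -- push-through identity
  have hcomm : A2 * Bᵀ = Bᵀ * A1 := by
    rw [hA2, hA1B, Matrix.add_mul, Matrix.mul_add, Matrix.smul_mul, Matrix.mul_smul,
      Matrix.one_mul, Matrix.mul_one, hMB, Matrix.mul_assoc]
  have hpush : Bᵀ * A1⁻¹ = A2⁻¹ * Bᵀ := by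
    calc Bᵀ * A1⁻¹ = A2⁻¹ * (A2 * (Bᵀ * A1⁻¹)) := by
          rw [← Matrix.mul_assoc, Matrix.nonsing_inv_mul _ hA2d, Matrix.one_mul]
      _ = A2⁻¹ * (Bᵀ * (A1 * A1⁻¹)) := by
          rw [← Matrix.mul_assoc A2, hcomm, Matrix.mul_assoc]
      _ = A2⁻¹ * Bᵀ := by rw [Matrix.mul_nonsing_inv _ hA1d, Matrix.mul_one]
  -- the matrix identity
  have e3 : (1 : Matrix (Fin n) (Fin n) ℝ) - A2⁻¹ * M = σ2 • A2⁻¹ := by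
    have h := Matrix.nonsing_inv_mul A2 hA2d
    rw [hA2, Matrix.mul_add, Matrix.mul_smul, Matrix.mul_one] at h
    linear_combination (norm := noncomm_ring) -h
  have hmat : Sx - Sx * Φᵀ * A1⁻¹ * Φ * Sx = σ2 • (S * A2⁻¹ * S) := by
    have : Sx * Φᵀ * A1⁻¹ * Φ * Sx = S * (A2⁻¹ * M) * S := by
      rw [hSxΦ, Matrix.mul_assoc (S * Bᵀ * A1⁻¹) Φ Sx, hΦSx,
        Matrix.mul_assoc S Bᵀ A1⁻¹, Matrix.mul_assoc S (Bᵀ * A1⁻¹) (B * S), hpush]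
      rw [hMB]
      simp only [Matrix.mul_assoc]
    rw [this, ← hSS]
    linear_combination (norm := noncomm_ring) S * e3 * S
  rw [hmat, Matrix.trace_smul, Matrix.trace_mul_cycle S A2⁻¹ S, hSS, smul_eq_mul,
    trace_eq_sum_dot_aux u hortho, Finset.mul_sum]
  apply Finset.sum_congr rfl
  intro i _
  have h0 : (σ2 + lam i) ≠ 0 := (add_pos_of_pos_of_nonneg hσ2 (hnonneg i)).ne'
  have hA2u : A2 *ᵥ u i = (σ2 + lam i) • u i := by
    rw [hA2, Matrix.add_mulVec, Matrix.smul_mulVec, Matrix.one_mulVec, heig, add_smul]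
  have h1 : A2⁻¹ *ᵥ (A2 *ᵥ u i) = u i := by
    rw [Matrix.mulVec_mulVec, Matrix.nonsing_inv_mul _ hA2d, Matrix.one_mulVec]
  rw [hA2u, Matrix.mulVec_smul] at h1
  have hinv : A2⁻¹ *ᵥ u i = (σ2 + lam i)⁻¹ • u i := by
    have h2 := congrArg (fun v => (σ2 + lam i)⁻¹ • v) h1
    simpa [smul_smul, inv_mul_cancel₀ h0] using h2
  rw [← Matrix.mulVec_mulVec, hinv, Matrix.mulVec_smul, dotProduct_smul, smul_eq_mul]
  field_simp
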